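/- If the transportation polytopes 𝒞(P_1,Q_1) and 𝒞(P_2,Q_2) are geometrically equivalent, then the I-projection from 𝒞(P_2,Q_2) to 𝒞(P_1,Q_1) is a two-sided inverse of the I-projection from 𝒞(P_1,Q_1) to 𝒞(P_2,Q_2): for all S ∈ 𝒞(P_1,Q_1), I_proj_{21}(I_proj_{12}(S)) = S. -/

import Mathlib

open Finset Filter Topology

def IsProbVec {n : ℕ} (P : Fin n → ℝ) : Prop :=
  (∀ i, 0 ≤ P i) ∧ ∑ i, P i = 1

def supp {α : Type*} (P : α → ℝ) : Set α := {i | 0 < P i}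

def supp2 {n m : ℕ} (S : Fin n → Fin m → ℝ) : Set (Fin n × Fin m) :=
  {p | 0 < S p.1 p.2}

def Coupling {n m : ℕ} (P : Fin n → ℝ) (Q : Fin m → ℝ) : Set (Fin n → Fin m → ℝ) :=
  {S | (∀ i j, 0 ≤ S i j) ∧ (∀ i, ∑ j, S i j = P i) ∧ (∀ j, ∑ i, S i j = Q j)}

/-- Kullback-Leibler divergence of bivariate distributions, as a real-valued sum
(valid, with the convention `0 log 0 = 0`, whenever `supp2 T ⊆ supp2 S`). -/
noncomputable def D2 {n m : ℕ} (T S : Fin n → Fin m → ℝ) : ℝ :=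
  ∑ i, ∑ j, T i j * Real.log (T i j / S i j)

/-- `T'` is an I-projection of `S` onto `𝒯`: it is absolutely continuous w.r.t. `S`
(equivalently, `D(T'‖S) < ∞`) and minimizes the divergence among all such elements of `𝒯`
(elements with `¬ supp2 T ⊆ supp2 S` have infinite divergence). -/
def IsIProj {n m : ℕ} (S : Fin n → Fin m → ℝ) (𝒯 : Set (Fin n → Fin m → ℝ))
    (T' : Fin n → Fin m → ℝ) : Prop :=
  T' ∈ 𝒯 ∧ supp2 T' ⊆ supp2 S ∧ ∀ T ∈ 𝒯, supp2 T ⊆ supp2 S → D2 T' S ≤ D2 T S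

noncomputable def prodDist {n m : ℕ} (P : Fin n → ℝ) (Q : Fin m → ℝ) :
    Fin n → Fin m → ℝ := fun i j => P i * Q j

/-- KL divergence of univariate distributions. -/
noncomputable def Dv {n : ℕ} (P Q : Fin n → ℝ) : ℝ :=
  ∑ i, P i * Real.log (P i / Q i)

def GeomEquiv {n m : ℕ} (C1 C2 : Set (Fin n → Fin m → ℝ)) : Prop :=
  (∀ S ∈ C1, ∃ T ∈ C2, supp2 T = supp2 S) ∧ (∀ T ∈ C2, ∃ S ∈ C1, supp2 S = supp2 T)

lemma philog_convex_pt {s : ℝ} (hs : 0 < s) {a t ε : ℝ} (ha : 0 ≤ a) (ht : 0 ≤ t)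
    (hε : 0 ≤ ε) (hε1 : ε ≤ 1) :
    ((1-ε)*a + ε*t) * Real.log (((1-ε)*a + ε*t)/s)
      ≤ (1-ε)*(a*Real.log (a/s)) + ε*(t*Real.log (t/s)) := by
  have h1ε : (0:ℝ) ≤ 1 - ε := by linarith
  have hR : 0 ≤ (1-ε)*a + ε*t := add_nonneg (mul_nonneg h1ε ha) (mul_nonneg hε ht)
  have key : ∀ x : ℝ, 0 ≤ x → x * Real.log (x/s) = x * Real.log x - x * Real.log s := by
    intro x hx
    rcases eq_or_lt_of_le hx with h|h
    · simp [← h]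
    · rw [Real.log_div (ne_of_gt h) (ne_of_gt hs)]; ring
  have hconv := Real.convexOn_mul_log.2 (Set.mem_Ici.2 ha) (Set.mem_Ici.2 ht) h1ε hε (by ring)
  simp only [smul_eq_mul] at hconv
  rw [key _ hR, key _ ha, key _ ht]
  nlinarith [hconv]

lemma hasDerivAt_point {a u s : ℝ} (h : u = 0 ∨ (0 < a ∧ 0 < s)) :
    HasDerivAt (fun ε : ℝ => (a + ε*u) * Real.log ((a + ε*u)/s))
      (u * (Real.log (a/s) + 1)) 0 := by
  rcases h with hu | ⟨ha, hs⟩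
  · simpa [hu] using (hasDerivAt_const (0:ℝ) (a * Real.log (a/s)))
  · have hF : HasDerivAt (fun ε : ℝ => a + ε*u) u 0 := by
      simpa using ((hasDerivAt_id (0:ℝ)).mul_const u).const_add a
    have h0 : a + (0:ℝ)*u = a := by ring
    have H1 : HasDerivAt (fun x : ℝ => x * Real.log x) (Real.log (a+(0:ℝ)*u) + 1) (a+(0:ℝ)*u) := by
      rw [h0]; exact Real.hasDerivAt_mul_log ha.ne'
    have H2 : HasDerivAt (fun x : ℝ => x * Real.log s) (Real.log s) (a+(0:ℝ)*u) := by
      simpa using (hasDerivAt_id (a+(0:ℝ)*u)).mul_const (Real.log s)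
    have H := (H1.sub H2).comp (0:ℝ) hF
    have hpos : ∀ᶠ ε : ℝ in 𝓝 0, 0 < a + ε*u := by
      have hc : ContinuousAt (fun ε : ℝ => a + ε*u) 0 := by fun_prop
      have h0' : (0:ℝ) < a + (0:ℝ)*u := by rw [h0]; exact ha
      exact hc.eventually (eventually_gt_nhds h0')
    have hev : (fun ε : ℝ => (a + ε*u) * Real.log ((a + ε*u)/s))
        =ᶠ[𝓝 (0:ℝ)] (fun ε : ℝ => (a+ε*u) * Real.log (a+ε*u) - (a+ε*u) * Real.log s) := by
      filter_upwards [hpos] with ε hε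
      rw [Real.log_div hε.ne' hs.ne']; ring
    have Hfinal := H.congr_of_eventuallyEq hev
    refine Hfinal.congr_deriv ?_
    rw [h0, Real.log_div ha.ne' hs.ne']; ring

lemma gibbs_eq {n m : ℕ} {S' S : Fin n → Fin m → ℝ}
    (hS'nn : ∀ i j, 0 ≤ S' i j) (hSnn : ∀ i j, 0 ≤ S i j)
    (hS'1 : ∑ i, ∑ j, S' i j = 1) (hS1 : ∑ i, ∑ j, S i j = 1)
    (hsupp : supp2 S' ⊆ supp2 S)
    (hD : ∑ i, ∑ j, S' i j * Real.log (S' i j / S i j) ≤ 0) : S' = S := by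
  set gap : Fin n → Fin m → ℝ :=
    fun i j => S' i j * Real.log (S' i j / S i j) - (S' i j - S i j) with hgap
  have hptnn : ∀ i j, 0 ≤ gap i j := by
    intro i j
    rcases eq_or_lt_of_le (hS'nn i j) with h0 | hpos
    · simp [hgap, ← h0, hSnn i j]
    · have hSpos : 0 < S i j := hsupp (show (i,j) ∈ supp2 S' from hpos)
      have hlog : Real.log (S i j / S' i j) ≤ S i j / S' i j - 1 :=
        Real.log_le_sub_one_of_pos (div_pos hSpos hpos)
      have hlogdiv : Real.log (S i j / S' i j) = - Real.log (S' i j / S i j) := by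
        rw [Real.log_div hSpos.ne' hpos.ne', Real.log_div hpos.ne' hSpos.ne']; ring
      rw [hlogdiv] at hlog
      have hc : S' i j * (S i j / S' i j) = S i j := by field_simp
      simp only [hgap]
      nlinarith [hlog, hpos, hc]
  have hsumgap : ∑ i, ∑ j, gap i j ≤ 0 := by
    have : ∑ i, ∑ j, gap i j
        = (∑ i, ∑ j, S' i j * Real.log (S' i j / S i j)) - ((∑ i, ∑ j, S' i j) - ∑ i, ∑ j, S i j) := by
      simp only [hgap, Finset.sum_sub_distrib]
    rw [this, hS'1, hS1]; linarith
  have hzero : ∀ i j, gap i j = 0 := by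
    have htot : ∑ i, ∑ j, gap i j = 0 :=
      le_antisymm hsumgap (Finset.sum_nonneg fun i _ => Finset.sum_nonneg fun j _ => hptnn i j)
    intro i j
    have h1 : ∀ i ∈ (univ : Finset (Fin n)), ∑ j, gap i j = 0 :=
      (Finset.sum_eq_zero_iff_of_nonneg
        (fun i _ => Finset.sum_nonneg fun j _ => hptnn i j)).1 htot
    exact (Finset.sum_eq_zero_iff_of_nonneg (fun j _ => hptnn i j)).1
      (h1 i (Finset.mem_univ i)) j (Finset.mem_univ j)
  funext i j
  have hz := hzero i j
  rcases eq_or_lt_of_le (hS'nn i j) with h0 | hpos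
  · simp only [hgap, ← h0] at hz ⊢
    simp at hz
    linarith [hz]
  · have hSpos : 0 < S i j := hsupp (show (i,j) ∈ supp2 S' from hpos)
    by_contra hne
    have hne1 : S i j / S' i j ≠ 1 := by
      intro h
      rw [div_eq_one_iff_eq hpos.ne'] at h
      exact hne h.symm
    have hlog : Real.log (S i j / S' i j) < S i j / S' i j - 1 :=
      Real.log_lt_sub_one_of_pos (div_pos hSpos hpos) hne1
    have hlogdiv : Real.log (S i j / S' i j) = - Real.log (S' i j / S i j) := by
      rw [Real.log_div hSpos.ne' hpos.ne', Real.log_div hpos.ne' hSpos.ne']; ring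
    rw [hlogdiv] at hlog
    have hc : S' i j * (S i j / S' i j) = S i j := by field_simp
    simp only [hgap] at hz
    nlinarith [hlog, hpos, hc]

lemma stepA {n m : ℕ} {P₂ : Fin n → ℝ} {Q₂ : Fin m → ℝ} {S Sstar T : Fin n → Fin m → ℝ}
    (hSnn : ∀ i j, 0 ≤ S i j)
    (hT : T ∈ Coupling P₂ Q₂) (hTsupp : supp2 T = supp2 S)
    (h12 : IsIProj S (Coupling P₂ Q₂) Sstar) :
    supp2 Sstar = supp2 S := by
  obtain ⟨hSt2, hStsupp, hStmin⟩ := h12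
  obtain ⟨hStnn, hStrow, hStcol⟩ := hSt2
  obtain ⟨hTnn, hTrow, hTcol⟩ := hT
  refine Set.Subset.antisymm hStsupp ?_
  by_contra hcon
  rw [Set.not_subset] at hcon
  obtain ⟨p, hpS, hpSt⟩ := hcon
  have hpS' : 0 < S p.1 p.2 := hpS
  have hpSt0 : Sstar p.1 p.2 = 0 := le_antisymm (not_lt.1 hpSt) (hStnn _ _)
  have hpT : 0 < T p.1 p.2 := by
    have : p ∈ supp2 T := by rw [hTsupp]; exact hpS
    exact this
  have hzero : ∀ q : Fin n × Fin m, ¬ (0 < S q.1 q.2) →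
      S q.1 q.2 = 0 ∧ Sstar q.1 q.2 = 0 ∧ T q.1 q.2 = 0 := by
    intro q hq
    refine ⟨le_antisymm (not_lt.1 hq) (hSnn _ _), ?_, ?_⟩
    · by_contra h
      exact hq (hStsupp (show q ∈ supp2 Sstar from lt_of_le_of_ne (hStnn _ _) (Ne.symm h)))
    · by_contra h
      have : q ∈ supp2 T := lt_of_le_of_ne (hTnn _ _) (Ne.symm h)
      rw [hTsupp] at this; exact hq this
  set ψ : (Fin n → Fin m → ℝ) → (Fin n × Fin m) → ℝ :=
    fun X q => X q.1 q.2 * Real.log (X q.1 q.2 / S q.1 q.2) with hψ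
  have hD2 : ∀ X : Fin n → Fin m → ℝ, D2 X S = ∑ q : Fin n × Fin m, ψ X q := by
    intro X
    rw [D2, Fintype.sum_prod_type (f := ψ X)]
  set M : ℝ := (∑ q ∈ univ.erase p, (ψ T q - ψ Sstar q))
      + T p.1 p.2 * Real.log (T p.1 p.2 / S p.1 p.2) with hM
  set ε : ℝ := min (1/2) (Real.exp (-(M+1)/ T p.1 p.2)) with hε
  have hε0 : 0 < ε := lt_min (by norm_num) (Real.exp_pos _)
  have hε1 : ε ≤ 1 := le_trans (min_le_left _ _) (by norm_num)
  set R : Fin n → Fin m → ℝ := fun i j => (1-ε) * Sstar i j + ε * T i j with hR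
  have hRnn : ∀ i j, 0 ≤ R i j := fun i j =>
    add_nonneg (mul_nonneg (by linarith) (hStnn i j)) (mul_nonneg hε0.le (hTnn i j))
  have hRC : R ∈ Coupling P₂ Q₂ := by
    refine ⟨hRnn, fun i => ?_, fun j => ?_⟩
    · show ∑ j, ((1-ε) * Sstar i j + ε * T i j) = P₂ i
      rw [Finset.sum_add_distrib, ← Finset.mul_sum, ← Finset.mul_sum, hStrow, hTrow]; ring
    · show ∑ i, ((1-ε) * Sstar i j + ε * T i j) = Q₂ j
      rw [Finset.sum_add_distrib, ← Finset.mul_sum, ← Finset.mul_sum, hStcol, hTcol]; ring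
  have hRsupp : supp2 R ⊆ supp2 S := by
    intro q hq
    by_contra h
    obtain ⟨_, h1, h2⟩ := hzero q h
    have hzq : R q.1 q.2 = 0 := by simp [hR, h1, h2]
    exact absurd (show (0:ℝ) < R q.1 q.2 from hq) (by rw [hzq]; exact lt_irrefl 0)
  have hptbound : ∀ q ∈ univ.erase p, ψ R q ≤ ψ Sstar q + ε * (ψ T q - ψ Sstar q) := by
    intro q _
    rcases lt_or_ge 0 (S q.1 q.2) with hSq | hSq
    · have hcv := philog_convex_pt hSq (hStnn q.1 q.2) (hTnn q.1 q.2) hε0.le hε1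
      simp only [hψ, hR]
      nlinarith [hcv]
    · obtain ⟨h0, h1, h2⟩ := hzero q (not_lt.2 hSq)
      simp [hψ, hR, h1, h2]
  have hRp : ψ R p = ε * (T p.1 p.2 * Real.log (T p.1 p.2 / S p.1 p.2)
      + T p.1 p.2 * Real.log ε) := by
    have h1 : R p.1 p.2 = ε * T p.1 p.2 := by simp [hR, hpSt0]
    have h2 : Real.log (ε * T p.1 p.2 / S p.1 p.2)
        = Real.log ε + Real.log (T p.1 p.2 / S p.1 p.2) := by
      rw [mul_div_assoc, Real.log_mul hε0.ne' (div_pos hpT hpS').ne']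
    simp only [hψ, h1, h2]; ring
  have hψStp : ψ Sstar p = 0 := by simp [hψ, hpSt0]
  have hcmp : D2 R S ≤ D2 Sstar S + ε * (M + T p.1 p.2 * Real.log ε) := by
    rw [hD2 R, hD2 Sstar, ← Finset.sum_erase_add _ (ψ R) (Finset.mem_univ p),
      ← Finset.sum_erase_add _ (ψ Sstar) (Finset.mem_univ p), hψStp, hRp]
    have hsum := Finset.sum_le_sum hptbound
    rw [Finset.sum_add_distrib, ← Finset.mul_sum] at hsum
    rw [hM]
    nlinarith [hsum]
  have hlogε : T p.1 p.2 * Real.log ε ≤ -(M+1) := by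
    have h1 : Real.log ε ≤ -(M+1)/T p.1 p.2 := by
      calc Real.log ε ≤ Real.log (Real.exp (-(M+1)/T p.1 p.2)) := by
            apply Real.log_le_log hε0 (min_le_right _ _)
        _ = -(M+1)/T p.1 p.2 := Real.log_exp _
    calc T p.1 p.2 * Real.log ε ≤ T p.1 p.2 * (-(M+1)/T p.1 p.2) :=
          mul_le_mul_of_nonneg_left h1 hpT.le
      _ = -(M+1) := by field_simp
  have hfinal := hStmin R hRC hRsupp
  nlinarith [hcmp, hfinal, hlogε, hε0, mul_le_mul_of_nonneg_left hlogε hε0.le]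

theorem stmt17 {n m : ℕ} (P₁ P₂ : Fin n → ℝ) (Q₁ Q₂ : Fin m → ℝ)
    (hP₁ : IsProbVec P₁) (hQ₁ : IsProbVec Q₁) (hP₂ : IsProbVec P₂) (hQ₂ : IsProbVec Q₂)
    (hGE : GeomEquiv (Coupling P₁ Q₁) (Coupling P₂ Q₂))
    (S Sstar S' : Fin n → Fin m → ℝ) (hS : S ∈ Coupling P₁ Q₁)
    (h12 : IsIProj S (Coupling P₂ Q₂) Sstar)
    (h21 : IsIProj Sstar (Coupling P₁ Q₁) S') : S' = S := by
  obtain ⟨hSnn, hSrow, hScol⟩ := hS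
  obtain ⟨T, hT, hTsupp⟩ := hGE.1 S ⟨hSnn, hSrow, hScol⟩
  have hsuppEq : supp2 Sstar = supp2 S := stepA hSnn hT hTsupp h12
  obtain ⟨hSt2, hStsupp, hStmin⟩ := h12
  obtain ⟨hStnn, hStrow, hStcol⟩ := hSt2
  obtain ⟨hS'C, hS'supp, hS'min⟩ := h21
  obtain ⟨hS'nn, hS'row, hS'col⟩ := hS'C
  -- basic zero facts
  have hSz : ∀ i j, S i j = 0 → Sstar i j = 0 ∧ S' i j = 0 := by
    intro i j h
    have h1 : Sstar i j = 0 := by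
      by_contra hne
      have : (i,j) ∈ supp2 Sstar := lt_of_le_of_ne (hStnn i j) (Ne.symm hne)
      rw [hsuppEq] at this
      exact absurd h (ne_of_gt this)
    refine ⟨h1, ?_⟩
    by_contra hne
    have h2 : (i,j) ∈ supp2 S' := lt_of_le_of_ne (hS'nn i j) (Ne.symm hne)
    have h3 : 0 < Sstar i j := hS'supp h2
    rw [h1] at h3
    exact absurd h3 (lt_irrefl 0)
  have hSstz : ∀ i j, 0 < S i j → 0 < Sstar i j := by
    intro i j h
    have : (i,j) ∈ supp2 S := h
    rw [← hsuppEq] at this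
    exact this
  -- totals
  have hS1 : ∑ i, ∑ j, S i j = 1 := by
    rw [Finset.sum_congr rfl fun i _ => hSrow i]; exact hP₁.2
  have hS'1 : ∑ i, ∑ j, S' i j = 1 := by
    rw [Finset.sum_congr rfl fun i _ => hS'row i]; exact hP₁.2
  -- Step B: first-order condition
  set U : Fin n → Fin m → ℝ := fun i j => S' i j - S i j with hU
  have hUz : ∀ i j, S i j = 0 → U i j = 0 := by
    intro i j h
    obtain ⟨_, h2⟩ := hSz i j h
    simp [hU, h, h2]
  have hcase : ∀ i j, U i j = 0 ∨ (0 < Sstar i j ∧ 0 < S i j) := by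
    intro i j
    rcases lt_or_ge 0 (S i j) with h | h
    · exact Or.inr ⟨hSstz i j h, h⟩
    · exact Or.inl (hUz i j (le_antisymm h (hSnn i j)))
  set g : ℝ → ℝ := fun ε => ∑ i, ∑ j,
    (Sstar i j + ε * U i j) * Real.log ((Sstar i j + ε * U i j) / S i j) with hg
  have hgD : ∀ ε : ℝ, g ε = D2 (fun i j => Sstar i j + ε * U i j) S := fun _ => rfl
  have hg0 : g 0 = D2 Sstar S := by simp [hg, D2]
  -- choice of δ
  have hq0 : ∃ q : Fin n × Fin m, 0 < S q.1 q.2 := by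
    by_contra hcon
    push_neg at hcon
    have : ∑ i, ∑ j, S i j = 0 := by
      apply Finset.sum_eq_zero
      intro i _
      apply Finset.sum_eq_zero
      intro j _
      exact le_antisymm (hcon (i,j)) (hSnn i j)
    rw [hS1] at this; norm_num at this
  obtain ⟨q₀, _⟩ := hq0
  have hne : (Finset.univ : Finset (Fin n × Fin m)).Nonempty := ⟨q₀, Finset.mem_univ _⟩
  set δ : ℝ := univ.inf' hne
    (fun q => if 0 < Sstar q.1 q.2 then Sstar q.1 q.2 / (|U q.1 q.2| + 1) else 1) with hδ
  have hδpos : 0 < δ := by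
    rw [hδ, Finset.lt_inf'_iff]
    intro q _
    split
    · positivity
    · norm_num
  have hδle : ∀ q : Fin n × Fin m, 0 < Sstar q.1 q.2 → δ ≤ Sstar q.1 q.2 / (|U q.1 q.2| + 1) := by
    intro q hq
    have := Finset.inf'_le (b := q)
      (fun q => if 0 < Sstar q.1 q.2 then Sstar q.1 q.2 / (|U q.1 q.2| + 1) else 1)
      (Finset.mem_univ q)
    rw [if_pos hq] at this
    exact this
  have hnng : ∀ ε : ℝ, |ε| < δ → ∀ i j, 0 ≤ Sstar i j + ε * U i j := by
    intro ε hεδ i j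
    rcases lt_or_ge 0 (Sstar i j) with h | h
    · have h1 := hδle (i,j) h
      have h2 : |ε| * (|U i j| + 1) ≤ Sstar i j := by
        have h3 : |ε| * (|U i j| + 1) < δ * (|U i j| + 1) := by
          apply mul_lt_mul_of_pos_right hεδ; positivity
        have h4 : δ * (|U i j| + 1) ≤ Sstar i j := by
          rw [← le_div_iff₀ (by positivity)]; exact h1
        linarith
      have h5 : ε * U i j ≥ -(|ε| * |U i j|) := by
        rw [← abs_mul]; exact neg_abs_le _
      nlinarith [abs_nonneg ε, abs_nonneg (U i j)]
    · have hst0 : Sstar i j = 0 := le_antisymm h (hStnn i j)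
      have hs0 : S i j = 0 := by
        by_contra hne'
        exact absurd (hSstz i j (lt_of_le_of_ne (hSnn i j) (Ne.symm hne'))) (by rw [hst0]; exact lt_irrefl 0)
      rw [hst0, hUz i j hs0]
      norm_num
  have hlocal : IsLocalMin g 0 := by
    rw [IsLocalMin, IsMinFilter]
    rw [Metric.eventually_nhds_iff]
    refine ⟨δ, hδpos, fun ε hεδ => ?_⟩
    rw [Real.dist_eq, sub_zero] at hεδ
    have hnn := hnng ε hεδ
    have hmem : (fun i j => Sstar i j + ε * U i j) ∈ Coupling P₂ Q₂ := by
      refine ⟨hnn, fun i => ?_, fun j => ?_⟩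
      · show ∑ j, (Sstar i j + ε * U i j) = P₂ i
        rw [Finset.sum_add_distrib, ← Finset.mul_sum]
        have : ∑ j, U i j = 0 := by
          simp only [hU, Finset.sum_sub_distrib, hS'row, hSrow, sub_self]
        rw [hStrow, this]; ring
      · show ∑ i, (Sstar i j + ε * U i j) = Q₂ j
        rw [Finset.sum_add_distrib, ← Finset.mul_sum]
        have : ∑ i, U i j = 0 := by
          simp only [hU, Finset.sum_sub_distrib, hS'col, hScol, sub_self]
        rw [hStcol, this]; ring
    have hsupp : supp2 (fun i j => Sstar i j + ε * U i j) ⊆ supp2 S := by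
      intro q hq
      by_contra h
      have hs0 : S q.1 q.2 = 0 := le_antisymm (not_lt.1 h) (hSnn _ _)
      obtain ⟨h1, _⟩ := hSz q.1 q.2 hs0
      have : Sstar q.1 q.2 + ε * U q.1 q.2 = 0 := by rw [h1, hUz _ _ hs0]; ring
      exact absurd (show (0:ℝ) < Sstar q.1 q.2 + ε * U q.1 q.2 from hq)
        (by rw [this]; exact lt_irrefl 0)
    rw [hg0, hgD ε]
    exact hStmin _ hmem hsupp
  have hderiv : HasDerivAt g
      (∑ i, ∑ j, U i j * (Real.log (Sstar i j / S i j) + 1)) 0 := by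
    rw [hg]
    apply HasDerivAt.fun_sum
    intro i _
    apply HasDerivAt.fun_sum
    intro j _
    exact hasDerivAt_point (hcase i j)
  have hd0 := hlocal.hasDerivAt_eq_zero hderiv
  have hUsum : ∑ i, ∑ j, U i j = 0 := by
    simp only [hU, Finset.sum_sub_distrib]
    rw [hS'1, hS1]; ring
  have hkey : ∑ i, ∑ j, U i j * Real.log (Sstar i j / S i j) = 0 := by
    have hexp : ∑ i, ∑ j, U i j * (Real.log (Sstar i j / S i j) + 1)
        = (∑ i, ∑ j, U i j * Real.log (Sstar i j / S i j)) + ∑ i, ∑ j, U i j := by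
      rw [← Finset.sum_add_distrib]
      apply Finset.sum_congr rfl
      intro i _
      rw [← Finset.sum_add_distrib]
      apply Finset.sum_congr rfl
      intro j _
      ring
    rw [hexp, hUsum] at hd0
    linarith
  -- Step C
  have hC1 : D2 S' Sstar = D2 S' S - ∑ i, ∑ j, S' i j * Real.log (Sstar i j / S i j) := by
    rw [D2, D2, ← Finset.sum_sub_distrib]
    apply Finset.sum_congr rfl
    intro i _
    rw [← Finset.sum_sub_distrib]
    apply Finset.sum_congr rfl
    intro j _
    rcases eq_or_lt_of_le (hS'nn i j) with h0 | hpos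
    · simp [← h0]
    · have hst : 0 < Sstar i j := hS'supp (show (i,j) ∈ supp2 S' from hpos)
      have hs : 0 < S i j := by
        have : (i,j) ∈ supp2 Sstar := hst
        rw [hsuppEq] at this; exact this
      rw [Real.log_div hpos.ne' hst.ne', Real.log_div hpos.ne' hs.ne',
        Real.log_div hst.ne' hs.ne']
      ring
  have hC2 : D2 S Sstar = - ∑ i, ∑ j, S i j * Real.log (Sstar i j / S i j) := by
    rw [D2, ← Finset.sum_neg_distrib]
    apply Finset.sum_congr rfl
    intro i _
    rw [← Finset.sum_neg_distrib]
    apply Finset.sum_congr rfl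
    intro j _
    rcases eq_or_lt_of_le (hSnn i j) with h0 | hpos
    · simp [← h0]
    · have hst : 0 < Sstar i j := hSstz i j hpos
      rw [Real.log_div hpos.ne' hst.ne', Real.log_div hst.ne' hpos.ne']
      ring
  have hUkey : ∑ i, ∑ j, S' i j * Real.log (Sstar i j / S i j)
      = ∑ i, ∑ j, S i j * Real.log (Sstar i j / S i j) := by
    have : ∑ i, ∑ j, (S' i j - S i j) * Real.log (Sstar i j / S i j) = 0 := by
      convert hkey using 2 with i _
    simp only [sub_mul, Finset.sum_sub_distrib] at this
    linarith
  have hle : D2 S' Sstar ≤ D2 S Sstar :=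
    hS'min S ⟨hSnn, hSrow, hScol⟩ (by rw [hsuppEq])
  rw [hC1, hC2, hUkey] at hle
  have hDle : D2 S' S ≤ 0 := by linarith
  exact gibbs_eq hS'nn hSnn hS'1 hS1 (fun q hq => by rw [← hsuppEq]; exact hS'supp hq) hDle
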